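/- Let G be an undirected graph on n vertices that is a disjoint union of complete components. Then for every symmetric positive definite n×n real matrix A, the matrix A_G obtained by setting a_{ij}=0 whenever (i,j) is not an edge of G (and i≠j) is positive definite. -/

import Mathlib

/-- Thresholding a matrix with respect to a graph: keep entries on edges and the
diagonal, set everything else to zero. -/
def threshold {n : ℕ} (G : SimpleGraph (Fin n)) [DecidableRel G.Adj]
    (A : Matrix (Fin n) (Fin n) ℝ) : Matrix (Fin n) (Fin n) ℝ :=
  Matrix.of fun i j => if i = j ∨ G.Adj i j then A i j else 0

/-- If every connected component of `G` is complete (i.e. `G` is a disjoint union of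
complete components), then thresholding any symmetric positive definite matrix with
respect to `G` yields a positive definite matrix. -/
theorem stmt_0 {n : ℕ} (G : SimpleGraph (Fin n)) [DecidableRel G.Adj]
    (hcomp : ∀ i j : Fin n, i ≠ j → G.Reachable i j → G.Adj i j)
    (A : Matrix (Fin n) (Fin n) ℝ) (hsymm : A.IsSymm) (hA : A.PosDef) :
    (threshold G A).PosDef := by
  classical
  set c : Fin n → G.ConnectedComponent := G.connectedComponentMk with hc
  have hiff : ∀ i j : Fin n, (i = j ∨ G.Adj i j) ↔ c i = c j := by
    intro i j
    constructor
    · rintro (rfl | h)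
      · rfl
      · exact SimpleGraph.ConnectedComponent.sound h.reachable
    · intro h
      by_cases hij : i = j
      · exact Or.inl hij
      · exact Or.inr (hcomp i j hij (SimpleGraph.ConnectedComponent.exact h))
  have hM : ∀ i j, threshold G A i j = if c i = c j then A i j else 0 := by
    intro i j
    simp only [threshold, Matrix.of_apply, hiff i j]
  have hAs : ∀ i j, A j i = A i j := fun i j => hsymm.apply i j
  rw [Matrix.posDef_iff_dotProduct_mulVec]
  constructor
  · -- Hermitian
    ext i j
    simp only [Matrix.conjTranspose_apply, star_trivial, hM]
    by_cases h : c i = c j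
    · rw [if_pos h.symm, if_pos h, hAs]
    · rw [if_neg (fun hh => h hh.symm), if_neg h]
  · intro x hx
    simp only [star_trivial]
    set y : G.ConnectedComponent → Fin n → ℝ :=
      fun κ i => if c i = κ then x i else 0 with hy
    have key : ∑ κ, dotProduct (y κ) (A.mulVec (y κ))
        = dotProduct x ((threshold G A).mulVec x) := by
      simp only [dotProduct, Matrix.mulVec, dotProduct, Finset.mul_sum]
      rw [Finset.sum_comm]
      refine Finset.sum_congr rfl fun i _ => ?_
      rw [Finset.sum_comm]
      refine Finset.sum_congr rfl fun j _ => ?_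
      have : ∀ κ, y κ i * (A i j * y κ j)
          = if c i = κ then x i * (A i j * (if c j = κ then x j else 0)) else 0 := by
        intro κ
        by_cases h : c i = κ <;> simp [hy, h]
      rw [Finset.sum_congr rfl fun κ _ => this κ, Finset.sum_ite_eq]
      simp only [Finset.mem_univ, if_true, hM]
      by_cases h : c i = c j
      · rw [if_pos h, if_pos h.symm]
      · rw [if_neg h, if_neg (fun hh => h hh.symm), zero_mul, mul_zero, mul_zero]
    rw [← key]
    obtain ⟨i0, hi0⟩ := Function.ne_iff.mp hx
    have hy0 : y (c i0) ≠ 0 := by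
      intro h
      exact hi0 (by simpa [hy] using congrFun h i0)
    refine Finset.sum_pos' (fun κ _ => ?_) ⟨c i0, Finset.mem_univ _, ?_⟩
    · have := (Matrix.posSemidef_iff_dotProduct_mulVec.mp hA.posSemidef).2 (y κ)
      simpa using this
    · have := hA.dotProduct_mulVec_pos hy0
      simpa using this
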